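/- (Equivalence of the coordinate Pachner (3,3)-relation with a family of Yang–Baxter equations.) The family Q satisfies the coordinate Pachner (3,3)-relation, i.e. for all i,j,k,l,m,n,p,q,r ∈ B: ∑_{s,t,u ∈ B} Q^{i,l,m}_{s,t}·Q^{s,j,n}_{p,u}·Q^{t,u,k}_{q,r} = ∑_{s,t,u ∈ B} Q^{m,n,k}_{s,t}·Q^{l,j,t}_{u,r}·Q^{i,u,s}_{p,q}, if and only if for all i,j,k ∈ B the following Yang–Baxter-type equality holds in End(V^{⊗3}): X^i_{1,2} ∘ Y^j_{1,3} ∘ Z^k_{2,3} = Z^k_{2,3} ∘ Y^j_{1,3} ∘ X^i_{1,2}. -/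

import Mathlib

open TensorProduct Finset

noncomputable section

namespace PachnerCoordYBE

variable {V : Type*} [AddCommGroup V] [Module ℂ V]

/-- The flip `σ : V ⊗ V → V ⊗ V`. -/
def flip : V ⊗[ℂ] V →ₗ[ℂ] V ⊗[ℂ] V := (TensorProduct.comm ℂ V V).toLinearMap

/-- `W_{1,2} = W ⊗ id`, acting on `V^{⊗3} = V ⊗ (V ⊗ V)`. -/
def op12 (W : V ⊗[ℂ] V →ₗ[ℂ] V ⊗[ℂ] V) :
    V ⊗[ℂ] (V ⊗[ℂ] V) →ₗ[ℂ] V ⊗[ℂ] (V ⊗[ℂ] V) :=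
  (TensorProduct.assoc ℂ V V V).toLinearMap ∘ₗ
    TensorProduct.map W LinearMap.id ∘ₗ (TensorProduct.assoc ℂ V V V).symm.toLinearMap

/-- `W_{2,3} = id ⊗ W`, acting on `V^{⊗3} = V ⊗ (V ⊗ V)`. -/
def op23 (W : V ⊗[ℂ] V →ₗ[ℂ] V ⊗[ℂ] V) :
    V ⊗[ℂ] (V ⊗[ℂ] V) →ₗ[ℂ] V ⊗[ℂ] (V ⊗[ℂ] V) :=
  TensorProduct.map LinearMap.id W

/-- `W_{1,3} = (id ⊗ σ) ∘ W_{1,2} ∘ (id ⊗ σ)`, acting on `V^{⊗3}`. -/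
def op13 (W : V ⊗[ℂ] V →ₗ[ℂ] V ⊗[ℂ] V) :
    V ⊗[ℂ] (V ⊗[ℂ] V) →ₗ[ℂ] V ⊗[ℂ] (V ⊗[ℂ] V) :=
  TensorProduct.map LinearMap.id flip ∘ₗ op12 W ∘ₗ TensorProduct.map LinearMap.id flip

lemma op12_apply' {B : Type*} [Fintype B] (e : Module.Basis B ℂ V)
    (C : B → B → ℂ) (W : V ⊗[ℂ] V →ₗ[ℂ] V ⊗[ℂ] V) (x y : V)
    (hW : W (x ⊗ₜ[ℂ] y) = ∑ a : B, ∑ b : B, C a b • (e a ⊗ₜ[ℂ] e b)) (z : V) :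
    op12 W (x ⊗ₜ[ℂ] (y ⊗ₜ[ℂ] z)) = ∑ a : B, ∑ b : B, C a b • (e a ⊗ₜ[ℂ] (e b ⊗ₜ[ℂ] z)) := by
  simp [op12, hW, sum_tmul, smul_tmul']

lemma op13_apply' {B : Type*} [Fintype B] (e : Module.Basis B ℂ V)
    (C : B → B → ℂ) (W : V ⊗[ℂ] V →ₗ[ℂ] V ⊗[ℂ] V) (x z : V)
    (hW : W (x ⊗ₜ[ℂ] z) = ∑ a : B, ∑ b : B, C a b • (e a ⊗ₜ[ℂ] e b)) (y : V) :
    op13 W (x ⊗ₜ[ℂ] (y ⊗ₜ[ℂ] z)) = ∑ a : B, ∑ b : B, C a b • (e a ⊗ₜ[ℂ] (y ⊗ₜ[ℂ] e b)) := by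
  simp [op13, op12, flip, hW, sum_tmul, smul_tmul', tmul_sum, tmul_smul]

lemma op23_apply' {B : Type*} [Fintype B] (e : Module.Basis B ℂ V)
    (C : B → B → ℂ) (W : V ⊗[ℂ] V →ₗ[ℂ] V ⊗[ℂ] V) (y z : V)
    (hW : W (y ⊗ₜ[ℂ] z) = ∑ a : B, ∑ b : B, C a b • (e a ⊗ₜ[ℂ] e b)) (x : V) :
    op23 W (x ⊗ₜ[ℂ] (y ⊗ₜ[ℂ] z)) = ∑ a : B, ∑ b : B, C a b • (x ⊗ₜ[ℂ] (e a ⊗ₜ[ℂ] e b)) := by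
  simp [op23, hW, tmul_sum, tmul_smul]

lemma keyF {B : Type*} [Fintype B] [DecidableEq B]
    (e : Module.Basis B ℂ V) (Q : B → B → B → B → B → ℂ)
    (X Y Z : B → (V ⊗[ℂ] V →ₗ[ℂ] V ⊗[ℂ] V))
    (hX' : ∀ i s t, X i (e s ⊗ₜ[ℂ] e t) = ∑ a : B, ∑ b : B, Q i a b s t • (e a ⊗ₜ[ℂ] e b))
    (hY' : ∀ j s t, Y j (e s ⊗ₜ[ℂ] e t) = ∑ a : B, ∑ b : B, Q a j b s t • (e a ⊗ₜ[ℂ] e b))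
    (hZ' : ∀ k s t, Z k (e s ⊗ₜ[ℂ] e t) = ∑ a : B, ∑ b : B, Q a b k s t • (e a ⊗ₜ[ℂ] e b))
    (i j k p q r l m n : B) :
    ((e.tensorProduct (e.tensorProduct e)).repr
      ((op12 (X i) ∘ₗ op13 (Y j) ∘ₗ op23 (Z k)) (e p ⊗ₜ[ℂ] (e q ⊗ₜ[ℂ] e r)))) (l, (m, n))
    = ∑ s : B, ∑ t : B, ∑ u : B, Q i l m s t * Q s j n p u * Q t u k q r := by
  have happ : (op12 (X i) ∘ₗ op13 (Y j) ∘ₗ op23 (Z k)) (e p ⊗ₜ[ℂ] (e q ⊗ₜ[ℂ] e r))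
      = ∑ t : B, ∑ u : B, Q t u k q r • ∑ s : B, ∑ n' : B, Q s j n' p u •
          ∑ a : B, ∑ b : B, Q i a b s t • (e a ⊗ₜ[ℂ] (e b ⊗ₜ[ℂ] e n')) := by
    rw [LinearMap.comp_apply, LinearMap.comp_apply, op23_apply' e _ _ _ _ (hZ' k q r)]
    simp only [map_sum, map_smul]
    refine Finset.sum_congr rfl fun t _ => Finset.sum_congr rfl fun u _ => congrArg _ ?_
    rw [op13_apply' e _ _ _ _ (hY' j p u)]
    simp only [map_sum, map_smul]
    refine Finset.sum_congr rfl fun s _ => Finset.sum_congr rfl fun n' _ => congrArg _ ?_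
    rw [op12_apply' e _ _ _ _ (hX' i s t)]
  rw [happ]
  simp only [map_sum, map_smul, Finsupp.coe_finset_sum, Finset.sum_apply, Finsupp.coe_smul,
    Pi.smul_apply, Module.Basis.tensorProduct_repr_tmul_apply, Module.Basis.repr_self,
    Finsupp.single_apply, smul_eq_mul]
  simp only [mul_ite, ite_mul, mul_one, mul_zero, one_mul, zero_mul,
    Finset.sum_ite_eq, Finset.sum_ite_eq', Finset.mem_univ, if_true,
    Finset.sum_ite_irrel, Finset.sum_const_zero, Finset.mul_sum]
  conv_lhs => enter [2, t]; rw [Finset.sum_comm]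
  rw [Finset.sum_comm]
  refine Finset.sum_congr rfl fun s _ => Finset.sum_congr rfl fun t _ =>
    Finset.sum_congr rfl fun u _ => ?_
  ring

lemma keyG {B : Type*} [Fintype B] [DecidableEq B]
    (e : Module.Basis B ℂ V) (Q : B → B → B → B → B → ℂ)
    (X Y Z : B → (V ⊗[ℂ] V →ₗ[ℂ] V ⊗[ℂ] V))
    (hX' : ∀ i s t, X i (e s ⊗ₜ[ℂ] e t) = ∑ a : B, ∑ b : B, Q i a b s t • (e a ⊗ₜ[ℂ] e b))
    (hY' : ∀ j s t, Y j (e s ⊗ₜ[ℂ] e t) = ∑ a : B, ∑ b : B, Q a j b s t • (e a ⊗ₜ[ℂ] e b))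
    (hZ' : ∀ k s t, Z k (e s ⊗ₜ[ℂ] e t) = ∑ a : B, ∑ b : B, Q a b k s t • (e a ⊗ₜ[ℂ] e b))
    (i j k p q r l m n : B) :
    ((e.tensorProduct (e.tensorProduct e)).repr
      ((op23 (Z k) ∘ₗ op13 (Y j) ∘ₗ op12 (X i)) (e p ⊗ₜ[ℂ] (e q ⊗ₜ[ℂ] e r)))) (l, (m, n))
    = ∑ s : B, ∑ t : B, ∑ u : B, Q m n k s t * Q l j t u r * Q i u s p q := by
  have happ : (op23 (Z k) ∘ₗ op13 (Y j) ∘ₗ op12 (X i)) (e p ⊗ₜ[ℂ] (e q ⊗ₜ[ℂ] e r))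
      = ∑ a : B, ∑ b : B, Q i a b p q • ∑ c : B, ∑ d : B, Q c j d a r •
          ∑ f : B, ∑ g : B, Q f g k b d • (e c ⊗ₜ[ℂ] (e f ⊗ₜ[ℂ] e g)) := by
    rw [LinearMap.comp_apply, LinearMap.comp_apply, op12_apply' e _ _ _ _ (hX' i p q)]
    simp only [map_sum, map_smul]
    refine Finset.sum_congr rfl fun a _ => Finset.sum_congr rfl fun b _ => congrArg _ ?_
    rw [op13_apply' e _ _ _ _ (hY' j a r)]
    simp only [map_sum, map_smul]
    refine Finset.sum_congr rfl fun c _ => Finset.sum_congr rfl fun d _ => congrArg _ ?_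
    rw [op23_apply' e _ _ _ _ (hZ' k b d)]
  rw [happ]
  simp only [map_sum, map_smul, Finsupp.coe_finset_sum, Finset.sum_apply, Finsupp.coe_smul,
    Pi.smul_apply, Module.Basis.tensorProduct_repr_tmul_apply, Module.Basis.repr_self,
    Finsupp.single_apply, smul_eq_mul]
  simp only [mul_ite, ite_mul, mul_one, mul_zero, one_mul, zero_mul,
    Finset.sum_ite_eq, Finset.sum_ite_eq', Finset.mem_univ, if_true,
    Finset.sum_ite_irrel, Finset.sum_const_zero, Finset.mul_sum]
  rw [Finset.sum_comm]
  conv_lhs => enter [2, s]; rw [Finset.sum_comm]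
  refine Finset.sum_congr rfl fun s _ => Finset.sum_congr rfl fun t _ =>
    Finset.sum_congr rfl fun u _ => ?_
  ring

/-- Equivalence of the coordinate Pachner (3,3)-relation with the family of
Yang–Baxter equations `X^i_{1,2} Y^j_{1,3} Z^k_{2,3} = Z^k_{2,3} Y^j_{1,3} X^i_{1,2}`. -/
theorem coordinate_pachner33_iff_yang_baxter
    {B : Type*} [Fintype B] [DecidableEq B]
    (e : Module.Basis B ℂ V)
    (Q : B → B → B → B → B → ℂ)
    (X Y Z : B → (V ⊗[ℂ] V →ₗ[ℂ] V ⊗[ℂ] V))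
    (hX : ∀ i j k l m : B,
      ((e.tensorProduct e).repr (X i (e l ⊗ₜ[ℂ] e m))) (j, k) = Q i j k l m)
    (hY : ∀ i j k l m : B,
      ((e.tensorProduct e).repr (Y j (e l ⊗ₜ[ℂ] e m))) (i, k) = Q i j k l m)
    (hZ : ∀ i j k l m : B,
      ((e.tensorProduct e).repr (Z k (e l ⊗ₜ[ℂ] e m))) (i, j) = Q i j k l m) :
    (∀ i j k l m n p q r : B,
        ∑ s : B, ∑ t : B, ∑ u : B, Q i l m s t * Q s j n p u * Q t u k q r
          = ∑ s : B, ∑ t : B, ∑ u : B, Q m n k s t * Q l j t u r * Q i u s p q)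
      ↔ (∀ i j k : B,
          op12 (X i) ∘ₗ op13 (Y j) ∘ₗ op23 (Z k)
            = op23 (Z k) ∘ₗ op13 (Y j) ∘ₗ op12 (X i)) := by
  have hX' : ∀ i s t, X i (e s ⊗ₜ[ℂ] e t)
      = ∑ a : B, ∑ b : B, Q i a b s t • (e a ⊗ₜ[ℂ] e b) := by
    intro i s t
    conv_lhs => rw [← (e.tensorProduct e).sum_repr (X i (e s ⊗ₜ[ℂ] e t))]
    rw [Fintype.sum_prod_type]
    simp [Module.Basis.tensorProduct_apply, hX]
  have hY' : ∀ j s t, Y j (e s ⊗ₜ[ℂ] e t)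
      = ∑ a : B, ∑ b : B, Q a j b s t • (e a ⊗ₜ[ℂ] e b) := by
    intro j s t
    conv_lhs => rw [← (e.tensorProduct e).sum_repr (Y j (e s ⊗ₜ[ℂ] e t))]
    rw [Fintype.sum_prod_type]
    simp [Module.Basis.tensorProduct_apply, hY]
  have hZ' : ∀ k s t, Z k (e s ⊗ₜ[ℂ] e t)
      = ∑ a : B, ∑ b : B, Q a b k s t • (e a ⊗ₜ[ℂ] e b) := by
    intro k s t
    conv_lhs => rw [← (e.tensorProduct e).sum_repr (Z k (e s ⊗ₜ[ℂ] e t))]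
    rw [Fintype.sum_prod_type]
    simp [Module.Basis.tensorProduct_apply, hZ]
  constructor
  · intro h i j k
    apply (e.tensorProduct (e.tensorProduct e)).ext
    rintro ⟨p, q, r⟩
    rw [Module.Basis.tensorProduct_apply, Module.Basis.tensorProduct_apply]
    apply (e.tensorProduct (e.tensorProduct e)).repr.injective
    ext ⟨l, m, n⟩
    rw [keyF e Q X Y Z hX' hY' hZ' i j k p q r l m n,
      keyG e Q X Y Z hX' hY' hZ' i j k p q r l m n]
    exact h i j k l m n p q r
  · intro h i j k l m n p q r
    rw [← keyF e Q X Y Z hX' hY' hZ' i j k p q r l m n,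
      ← keyG e Q X Y Z hX' hY' hZ' i j k p q r l m n, h i j k]


end PachnerCoordYBE
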